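/- Fixing a sequence of gradients g_1,…,g_T, for every t ∈ {1,…,T} and every coordinate i ∈ {1,…,d} the SM3-II accumulator is sandwiched between the Adagrad and SM3-I accumulators: ∑_{s=1}^t g_s(i)² ≤ ν'_t(i) ≤ ν_t(i). -/

import Mathlib

open Finset

/-- Fixing a sequence of gradients `g 1, …, g T`, for every `t ∈ {1,…,T}`
and coordinate `i`, the SM3-II accumulator is sandwiched between the Adagrad and SM3-I
accumulators: `∑_{s=1}^t g s i ^ 2 ≤ ν' t i ≤ ν t i`. -/
theorem sm3_II_sandwich
    (d k T : ℕ) (hd : 0 < d) (hk : 0 < k) (hT : 0 < T)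
    (S : Fin k → Finset (Fin d))
    (hS : ∀ r, (S r).Nonempty)
    (hcover : ∀ i : Fin d, ∃ r, i ∈ S r)
    (g : ℕ → Fin d → ℝ)
    (μ : ℕ → Fin k → ℝ) (ν : ℕ → Fin d → ℝ)
    (hμ : ∀ t r, μ t r = ∑ s ∈ Finset.Icc 1 t, (S r).sup' (hS r) (fun j => g s j ^ 2))
    (hν : ∀ t (i : Fin d), ν t i =
      (Finset.univ.filter (fun r => i ∈ S r)).inf'
        (by obtain ⟨r, hr⟩ := hcover i
            exact ⟨r, Finset.mem_filter.mpr ⟨Finset.mem_univ r, hr⟩⟩)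
        (fun r => μ t r))
    (μ' : ℕ → Fin k → ℝ) (ν' : ℕ → Fin d → ℝ)
    (hμ'0 : ∀ r, μ' 0 r = 0)
    (hν' : ∀ t, 1 ≤ t → ∀ i : Fin d, ν' t i =
      (Finset.univ.filter (fun r => i ∈ S r)).inf'
        (by obtain ⟨r, hr⟩ := hcover i
            exact ⟨r, Finset.mem_filter.mpr ⟨Finset.mem_univ r, hr⟩⟩)
        (fun r => μ' (t - 1) r) + g t i ^ 2)
    (hμ' : ∀ t, 1 ≤ t → ∀ r, μ' t r = (S r).sup' (hS r) (fun j => ν' t j)) :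
    ∀ t ∈ Finset.Icc 1 T, ∀ i : Fin d,
      (∑ s ∈ Finset.Icc 1 t, g s i ^ 2) ≤ ν' t i ∧ ν' t i ≤ ν t i := by
  have hmem : ∀ (i : Fin d) (r : Fin k), i ∈ S r →
      r ∈ Finset.univ.filter (fun r => i ∈ S r) := fun i r hr =>
    Finset.mem_filter.mpr ⟨Finset.mem_univ r, hr⟩
  have key : ∀ t : ℕ, (∀ r, μ' t r ≤ μ t r) ∧
      (1 ≤ t → ∀ i : Fin d,
        (∑ s ∈ Finset.Icc 1 t, g s i ^ 2) ≤ ν' t i ∧ ν' t i ≤ ν t i) := by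
    intro t
    induction t with
    | zero =>
      refine ⟨fun r => ?_, fun h => absurd h (by norm_num)⟩
      rw [hμ'0, hμ]
      simp
    | succ n ih =>
      have hsand : ∀ i : Fin d,
          (∑ s ∈ Finset.Icc 1 (n+1), g s i ^ 2) ≤ ν' (n+1) i ∧ ν' (n+1) i ≤ ν (n+1) i := by
        intro i
        have hne : (Finset.univ.filter (fun r => i ∈ S r)).Nonempty := by
          obtain ⟨r, hr⟩ := hcover i
          exact ⟨r, hmem i r hr⟩
        have hν'eq := hν' (n+1) (by omega) i
        simp only [Nat.add_sub_cancel] at hν'eq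
        have hsum : (∑ s ∈ Finset.Icc 1 (n+1), g s i ^ 2) =
            (∑ s ∈ Finset.Icc 1 n, g s i ^ 2) + g (n+1) i ^ 2 :=
          Finset.sum_Icc_succ_top (by omega) _
        constructor
        · rw [hν'eq, hsum]
          refine add_le_add ?_ le_rfl
          apply Finset.le_inf'
          intro r hr
          rcases Nat.eq_zero_or_pos n with hn | hn
          · subst hn; simp [hμ'0]
          · have hir : i ∈ S r := (Finset.mem_filter.mp hr).2
            calc (∑ s ∈ Finset.Icc 1 n, g s i ^ 2) ≤ ν' n i := ((ih.2 hn) i).1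
              _ ≤ μ' n r := by
                  rw [hμ' n hn r]
                  exact Finset.le_sup' _ hir
        · rw [hν'eq, hν]
          apply Finset.le_inf'
          intro r hr
          have hir : i ∈ S r := (Finset.mem_filter.mp hr).2
          have h1 : (Finset.univ.filter (fun r => i ∈ S r)).inf'
              (by obtain ⟨r, hr⟩ := hcover i
                  exact ⟨r, Finset.mem_filter.mpr ⟨Finset.mem_univ r, hr⟩⟩)
              (fun r => μ' n r) ≤ μ' n r := Finset.inf'_le _ hr
          have h2 : μ' n r ≤ μ n r := ih.1 r
          have h3 : g (n+1) i ^ 2 ≤ (S r).sup' (hS r) (fun j => g (n+1) j ^ 2) :=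
            Finset.le_sup' (fun j => g (n+1) j ^ 2) hir
          have h4 : μ (n+1) r = μ n r + (S r).sup' (hS r) (fun j => g (n+1) j ^ 2) := by
            rw [hμ, hμ, Finset.sum_Icc_succ_top (by omega)]
          rw [h4]
          exact add_le_add (h1.trans h2) h3
      refine ⟨fun r => ?_, fun _ => hsand⟩
      rw [hμ' (n+1) (by omega) r]
      apply Finset.sup'_le
      intro j hj
      have := (hsand j).2
      rw [hν] at this
      exact this.trans (Finset.inf'_le _ (hmem j r hj))
  exact fun t ht i => (key t).2 (Finset.mem_Icc.mp ht).1 i
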